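/- If z ∈ ℤ[i] is nonzero, ℓ∞(z) ≤ wₙ - 2^{v₂(z)+1}, and ℓ₁(z) ≤ w_{n+1} - 3·2^{v₂(z)}, then φ(z) ≤ n. -/

import Mathlib

open GaussianInt

noncomputable section

/-- The sequence w: w_{2k} = 3·2^k, w_{2k+1} = 4·2^k. -/
def w (n : ℕ) : ℤ := if n % 2 = 0 then 3 * 2 ^ (n / 2) else 4 * 2 ^ (n / 2)

/-- 2-adic valuation of gcd(Re z, Im z). -/
def v2 (z : GaussianInt) : ℕ := padicValNat 2 (Int.gcd z.re z.im)

/-- ℓ₁ norm. -/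
def l1 (z : GaussianInt) : ℤ := |z.re| + |z.im|

/-- ℓ∞ norm. -/
def linf (z : GaussianInt) : ℤ := max |z.re| |z.im|

/-- m(z) = min(|Re z|, |Im z|). -/
def mm (z : GaussianInt) : ℤ := min |z.re| |z.im|

/-- The algebraic norm. -/
def Nm (z : GaussianInt) : ℤ := z.re ^ 2 + z.im ^ 2

/-- Graves' formula for the minimal Euclidean function φ on ℤ[i]. -/
def phi (z : GaussianInt) : ℕ :=
  let j := v2 z
  let n := sInf {n : ℕ | |z.re| ≤ 2 ^ j * (w n - 2) ∧ |z.im| ≤ 2 ^ j * (w n - 2)}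
  if l1 z ≤ 2 ^ j * (w (n + 1) - 3) then n + 2 * j else n + 2 * j + 1

/-- Nearest integer, rounding halves down. -/
def nint (x : ℚ) : ℤ := if x - ⌊x⌋ ≤ 1 / 2 then ⌊x⌋ else ⌈x⌉

/-- Gauss quotient: coordinatewise nearest-integer rounding of a·conj(b)/Nm(b). -/
def gq (a b : GaussianInt) : GaussianInt :=
  ⟨nint (((a.re * b.re + a.im * b.im : ℤ) : ℚ) / ((b.re ^ 2 + b.im ^ 2 : ℤ) : ℚ)),
   nint (((a.im * b.re - a.re * b.im : ℤ) : ℚ) / ((b.re ^ 2 + b.im ^ 2 : ℤ) : ℚ))⟩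

/-- Gauss remainder. -/
def gr (a b : GaussianInt) : GaussianInt := a - gq a b * b

/-- The imaginary unit in ℤ[i]. -/
def Ii : GaussianInt := ⟨0, 1⟩

/-- The canonical unit u_z. -/
def uz (z : GaussianInt) : GaussianInt :=
  if |z.re| > |z.im| then (if 0 < z.re then 1 else -1)
  else if |z.im| > |z.re| then (if 0 < z.im then -Ii else Ii)
  else if 0 < z.re then (if 0 < z.im then 1 else Ii)
  else (if 0 < z.im then -Ii else -1)

/-- s(z) = sgn(Im(u_z·z)). -/
def sfun (z : GaussianInt) : ℤ := Int.sign ((uz z * z).im)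



lemma w_add_two (k : ℕ) : w (k + 2) = 2 * w k := by
  unfold w
  have h1 : (k + 2) % 2 = k % 2 := by omega
  have h2 : (k + 2) / 2 = k / 2 + 1 := by omega
  rw [h1, h2]
  split <;> ring

lemma pow_mul_w (j k : ℕ) : 2 ^ j * w k = w (k + 2 * j) := by
  induction j with
  | zero => simp
  | succ j ih =>
    have h : w (k + 2 * (j + 1)) = 2 * w (k + 2 * j) := by
      rw [show k + 2 * (j + 1) = (k + 2 * j) + 2 by ring, w_add_two]
    rw [h, ← ih]; ring

lemma w_le (n : ℕ) : w n ≤ 4 * 2 ^ (n / 2) := by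
  have ht : (0:ℤ) ≤ 2 ^ (n / 2) := by positivity
  unfold w; split <;> linarith


theorem stmt5 (z : GaussianInt) (hz : z ≠ 0) (n : ℕ)
    (h1 : linf z ≤ w n - 2 ^ (v2 z + 1))
    (h2 : l1 z ≤ w (n + 1) - 3 * 2 ^ (v2 z)) :
    phi z ≤ n := by
  set j := v2 z with hj
  -- 2^j ≤ linf z
  have hg0 : Int.gcd z.re z.im ≠ 0 := by
    intro hg
    obtain ⟨hre, him⟩ := Int.gcd_eq_zero_iff.mp hg
    exact hz (by ext <;> simp [hre, him])
  have hdvd : (2:ℕ) ^ j ∣ Int.gcd z.re z.im := pow_padicValNat_dvd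
  have hle : (2:ℕ) ^ j ≤ Int.gcd z.re z.im := Nat.le_of_dvd (Nat.pos_of_ne_zero hg0) hdvd
  have hgl : ((Int.gcd z.re z.im : ℤ)) ≤ linf z := by
    rcases (not_and_or.mp (Int.gcd_eq_zero_iff.not.mp hg0)) with h | h
    · have hd : ((Int.gcd z.re z.im : ℤ)) ∣ |z.re| := (dvd_abs _ _).mpr (Int.gcd_dvd_left _ _)
      exact (Int.le_of_dvd (abs_pos.mpr h) hd).trans (le_max_left _ _)
    · have hd : ((Int.gcd z.re z.im : ℤ)) ∣ |z.im| := (dvd_abs _ _).mpr (Int.gcd_dvd_right _ _)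
      exact (Int.le_of_dvd (abs_pos.mpr h) hd).trans (le_max_right _ _)
  have hpow : (2:ℤ) ^ j ≤ linf z := by
    calc (2:ℤ) ^ j = ((2 ^ j : ℕ) : ℤ) := by push_cast; ring
    _ ≤ (Int.gcd z.re z.im : ℤ) := by exact_mod_cast hle
    _ ≤ linf z := hgl
  have hwn : 3 * 2 ^ j ≤ w n := by
    have : (2:ℤ) ^ (j + 1) = 2 * 2 ^ j := by ring
    linarith [h1, hpow, this]
  have h2j : 2 * j ≤ n := by
    by_contra hc
    push_neg at hc
    have hj1 : 1 ≤ j := by omega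
    have hnd : n / 2 ≤ j - 1 := by omega
    have hmono : (2:ℤ) ^ (n / 2) ≤ 2 ^ (j - 1) := by
      exact pow_le_pow_right₀ (by norm_num) hnd
    have hjj : (2:ℤ) ^ j = 2 * 2 ^ (j - 1) := by
      rw [← pow_succ']; congr 1; omega
    have := w_le n
    nlinarith [pow_pos (by norm_num : (0:ℤ) < 2) (j - 1)]
  -- membership
  have hkey : ∀ k, 2 ^ j * (w k - 2) = w (k + 2 * j) - 2 ^ (j + 1) := by
    intro k
    have := pow_mul_w j k
    have h2 : (2:ℤ) ^ (j + 1) = 2 ^ j * 2 := by ring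
    linarith [this, h2, mul_sub ((2:ℤ)^j) (w k) 2]
  set S := {m : ℕ | |z.re| ≤ 2 ^ j * (w m - 2) ∧ |z.im| ≤ 2 ^ j * (w m - 2)} with hS
  have hmem : (n - 2 * j) ∈ S := by
    constructor <;>
    · rw [hkey, show n - 2 * j + 2 * j = n by omega]
      refine le_trans ?_ h1
      simp [linf, le_max_left, le_max_right]
  have hm : sInf S ≤ n - 2 * j := Nat.sInf_le hmem
  have hphi : phi z = if l1 z ≤ 2 ^ j * (w (sInf S + 1) - 3) then sInf S + 2 * j
      else sInf S + 2 * j + 1 := rfl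
  rw [hphi]
  split
  · omega
  · rename_i hneg
    rcases lt_or_eq_of_le hm with hlt | heq
    · omega
    · exfalso
      apply hneg
      have hk3 : 2 ^ j * (w (sInf S + 1) - 3) = w (n + 1) - 3 * 2 ^ j := by
        rw [heq]
        have hp := pow_mul_w j (n - 2 * j + 1)
        rw [show n - 2 * j + 1 + 2 * j = n + 1 by omega] at hp
        linarith [mul_sub ((2:ℤ)^j) (w (n - 2 * j + 1)) 3, hp]
      rw [hk3]
      exact h2
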